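/- Let Ω, Ω' ⊂ ℝ^d be disjoint bounded measurable sets, γ_δ a symmetric nonnegative kernel, and u, v bounded measurable functions on Ω ∪ Ω' such that all integrals below converge absolutely. Define L u(x) = ∫_{Ω∪Ω'} (u(y)−u(x)) γ_δ(x,y) dy for x ∈ Ω and N u(x) = −∫_Ω (u(y)−u(x)) γ_δ(x,y) dy for x ∈ Ω'. Then (1/2) ∫∫_{(Ω∪Ω')² \ Ω'²} (v(y)−v(x))(u(y)−u(x)) γ_δ(x,y) dy dx = −∫_Ω v(x) L u(x) dx + ∫_{Ω'} v(x) N u(x) dx. -/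
import Mathlib


open MeasureTheory Set

lemma aux_swap_map {α : Type*} [MeasurableSpace α] (μ : Measure α) [SFinite μ]
    {D : Set (α × α)} (hDm : MeasurableSet D) (hDs : Prod.swap ⁻¹' D = D) :
    (μ.prod μ).restrict D
      = Measure.map (⇑(MeasurableEquiv.prodComm : α × α ≃ᵐ α × α)) ((μ.prod μ).restrict D) := by
  have hcoe : ⇑(MeasurableEquiv.prodComm : α × α ≃ᵐ α × α) = Prod.swap := rfl
  rw [hcoe]
  conv_lhs => rw [← Measure.prod_swap]
  rw [Measure.restrict_map measurable_swap hDm, hDs]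

lemma aux_swap_integral {α : Type*} [MeasurableSpace α] (μ : Measure α) [SFinite μ]
    {D : Set (α × α)} (hDm : MeasurableSet D) (hDs : Prod.swap ⁻¹' D = D)
    (h : α × α → ℝ) :
    ∫ p in D, h p.swap ∂(μ.prod μ) = ∫ p in D, h p ∂(μ.prod μ) := by
  conv_rhs => rw [aux_swap_map μ hDm hDs]
  rw [integral_map_equiv (MeasurableEquiv.prodComm : α × α ≃ᵐ α × α) h]
  rfl

lemma aux_swap_integrable {α : Type*} [MeasurableSpace α] (μ : Measure α) [SFinite μ]
    {D : Set (α × α)} (hDm : MeasurableSet D) (hDs : Prod.swap ⁻¹' D = D)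
    (h : α × α → ℝ) (hh : IntegrableOn h D (μ.prod μ)) :
    IntegrableOn (fun p => h p.swap) D (μ.prod μ) := by
  have hcoe : ⇑(MeasurableEquiv.prodComm : α × α ≃ᵐ α × α) = Prod.swap := rfl
  unfold IntegrableOn at hh ⊢
  rw [aux_swap_map μ hDm hDs] at hh
  exact (integrable_map_equiv (MeasurableEquiv.prodComm : α × α ≃ᵐ α × α) h).mp hh

/-- nonlocal Green's first identity with Neumann operator:
`(1/2) ∫∫_{(Ω∪Ω')² \ Ω'²} (v(y)−v(x))(u(y)−u(x)) γ(x,y) dy dx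
  = −∫_Ω v L u dx + ∫_{Ω'} v N u dx`, where `L u(x) = ∫_{Ω∪Ω'} (u(y)−u(x)) γ(x,y) dy`
and `N u(x) = −∫_Ω (u(y)−u(x)) γ(x,y) dy`. -/
theorem nonlocal_greens_first_identity_neumann
    (d : ℕ) (Ω Ω' : Set (EuclideanSpace ℝ (Fin d)))
    (hΩm : MeasurableSet Ω) (hΩ'm : MeasurableSet Ω')
    (hdisj : Disjoint Ω Ω')
    (hΩbdd : Bornology.IsBounded Ω) (hΩ'bdd : Bornology.IsBounded Ω')
    (γ : EuclideanSpace ℝ (Fin d) → EuclideanSpace ℝ (Fin d) → ℝ)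
    (hγsymm : ∀ x y, γ x y = γ y x) (hγnn : ∀ x y, 0 ≤ γ x y)
    (u v : EuclideanSpace ℝ (Fin d) → ℝ)
    (hub : ∃ M, ∀ x ∈ Ω ∪ Ω', |u x| ≤ M) (hvb : ∃ M, ∀ x ∈ Ω ∪ Ω', |v x| ≤ M)
    (hum : Measurable u) (hvm : Measurable v)
    (hint : IntegrableOn
      (fun p : EuclideanSpace ℝ (Fin d) × EuclideanSpace ℝ (Fin d) =>
        (v p.2 - v p.1) * (u p.2 - u p.1) * γ p.1 p.2)
      (((Ω ∪ Ω') ×ˢ (Ω ∪ Ω')) \ (Ω' ×ˢ Ω')))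
    (hintvu : IntegrableOn
      (fun p : EuclideanSpace ℝ (Fin d) × EuclideanSpace ℝ (Fin d) =>
        v p.1 * (u p.2 - u p.1) * γ p.1 p.2)
      (((Ω ∪ Ω') ×ˢ (Ω ∪ Ω')) \ (Ω' ×ˢ Ω'))) :
    (1 / 2 : ℝ) *
        ∫ p in ((Ω ∪ Ω') ×ˢ (Ω ∪ Ω')) \ (Ω' ×ˢ Ω'),
          (v p.2 - v p.1) * (u p.2 - u p.1) * γ p.1 p.2
      = - (∫ x in Ω, v x * ∫ y in Ω ∪ Ω', (u y - u x) * γ x y)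
        + ∫ x in Ω', v x * (- ∫ y in Ω, (u y - u x) * γ x y) := by
  have hdisj' : ∀ a, a ∈ Ω → a ∉ Ω' := fun a ha ha' => Set.disjoint_left.mp hdisj ha ha'
  set D := ((Ω ∪ Ω') ×ˢ (Ω ∪ Ω')) \ (Ω' ×ˢ Ω') with hD
  have hDm : MeasurableSet D :=
    ((hΩm.union hΩ'm).prod (hΩm.union hΩ'm)).diff (hΩ'm.prod hΩ'm)
  have hDsymm : Prod.swap ⁻¹' D = D := by
    ext ⟨x, y⟩
    simp only [hD, Set.mem_preimage, Prod.swap_prod_mk, Set.mem_diff, Set.mem_prod,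
      Set.mem_union]
    tauto
  -- work with the product measure
  rw [Measure.volume_eq_prod] at hint hintvu ⊢
  set μ := (volume : Measure (EuclideanSpace ℝ (Fin d)))
  set g : EuclideanSpace ℝ (Fin d) × EuclideanSpace ℝ (Fin d) → ℝ :=
    fun p => v p.1 * (u p.2 - u p.1) * γ p.1 p.2 with hg
  -- step 1: symmetrization
  have key : ∫ p in D, (v p.2 - v p.1) * (u p.2 - u p.1) * γ p.1 p.2 ∂(μ.prod μ)
      = -2 * ∫ p in D, g p ∂(μ.prod μ) := by
    have hswint : IntegrableOn (fun p => g p.swap) D (μ.prod μ) :=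
      aux_swap_integrable μ hDm hDsymm g hintvu
    have hpt : ∀ p : EuclideanSpace ℝ (Fin d) × EuclideanSpace ℝ (Fin d),
        (v p.2 - v p.1) * (u p.2 - u p.1) * γ p.1 p.2 = -(g p.swap) - g p := by
      intro ⟨x, y⟩
      simp only [hg, Prod.swap_prod_mk]
      rw [hγsymm y x]
      ring
    calc ∫ p in D, (v p.2 - v p.1) * (u p.2 - u p.1) * γ p.1 p.2 ∂(μ.prod μ)
        = ∫ p in D, (-(g p.swap) - g p) ∂(μ.prod μ) := by
          exact integral_congr_ae (Filter.EventuallyEq.of_eq (funext hpt))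
      _ = -(∫ p in D, g p.swap ∂(μ.prod μ)) - ∫ p in D, g p ∂(μ.prod μ) := by
          have hn : Integrable (fun p => -(g p.swap)) ((μ.prod μ).restrict D) := hswint.neg
          rw [integral_sub hn hintvu, integral_neg]
      _ = -2 * ∫ p in D, g p ∂(μ.prod μ) := by
          rw [aux_swap_integral μ hDm hDsymm g]; ring
  rw [key]
  -- step 2: decompose D
  have hDun : D = (Ω ×ˢ (Ω ∪ Ω')) ∪ (Ω' ×ˢ Ω) := by
    ext ⟨x, y⟩
    simp only [hD, Set.mem_diff, Set.mem_prod, Set.mem_union]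
    constructor
    · rintro ⟨⟨hx, hy⟩, hn⟩
      rcases hx with hx | hx
      · exact Or.inl ⟨hx, hy⟩
      · rcases hy with hy | hy
        · exact Or.inr ⟨hx, hy⟩
        · exact absurd ⟨hx, hy⟩ hn
    · rintro (⟨hx, hy⟩ | ⟨hx, hy⟩)
      · exact ⟨⟨Or.inl hx, hy⟩, fun h => hdisj' x hx h.1⟩
      · exact ⟨⟨Or.inr hx, Or.inl hy⟩, fun h => hdisj' y hy h.2⟩
  have hsubA : Ω ×ˢ (Ω ∪ Ω') ⊆ D := by rw [hDun]; exact Set.subset_union_left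
  have hsubB : Ω' ×ˢ Ω ⊆ D := by rw [hDun]; exact Set.subset_union_right
  have hAint : IntegrableOn g (Ω ×ˢ (Ω ∪ Ω')) (μ.prod μ) := hintvu.mono_set hsubA
  have hBint : IntegrableOn g (Ω' ×ˢ Ω) (μ.prod μ) := hintvu.mono_set hsubB
  have hdisjAB : Disjoint (Ω ×ˢ (Ω ∪ Ω')) (Ω' ×ˢ Ω) := by
    rw [Set.disjoint_left]
    rintro ⟨x, y⟩ ⟨hx, -⟩ ⟨hx', -⟩
    exact hdisj' x hx hx'
  have hsplit : ∫ p in D, g p ∂(μ.prod μ)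
      = (∫ p in Ω ×ˢ (Ω ∪ Ω'), g p ∂(μ.prod μ)) + ∫ p in Ω' ×ˢ Ω, g p ∂(μ.prod μ) := by
    rw [hDun]
    exact setIntegral_union hdisjAB (hΩ'm.prod hΩm) hAint hBint
  -- step 3: Fubini on each piece
  have hA : ∫ p in Ω ×ˢ (Ω ∪ Ω'), g p ∂(μ.prod μ)
      = ∫ x in Ω, v x * ∫ y in Ω ∪ Ω', (u y - u x) * γ x y ∂μ ∂μ := by
    rw [setIntegral_prod g hAint]
    refine setIntegral_congr_fun hΩm fun x _ => ?_
    simp only [hg]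
    rw [← integral_const_mul]
    refine integral_congr_ae (Filter.EventuallyEq.of_eq (funext fun y => ?_))
    ring
  have hB : ∫ p in Ω' ×ˢ Ω, g p ∂(μ.prod μ)
      = ∫ x in Ω', v x * ∫ y in Ω, (u y - u x) * γ x y ∂μ ∂μ := by
    rw [setIntegral_prod g hBint]
    refine setIntegral_congr_fun hΩ'm fun x _ => ?_
    simp only [hg]
    rw [← integral_const_mul]
    refine integral_congr_ae (Filter.EventuallyEq.of_eq (funext fun y => ?_))
    ring
  rw [hsplit, hA, hB]
  have : ∫ x in Ω', v x * (-∫ y in Ω, (u y - u x) * γ x y ∂μ) ∂μ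
      = - ∫ x in Ω', v x * ∫ y in Ω, (u y - u x) * γ x y ∂μ ∂μ := by
    rw [← integral_neg]
    refine setIntegral_congr_fun hΩ'm fun x _ => ?_
    ring
  rw [this]
  ring
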